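/- arXiv:0801.2913 — 3 statements merged into one kernel-verified Lean document; each statement's English description precedes it below -/
import Mathlib

section
/- Let z1, z2, z3 be complex numbers, let r1² = 1 + |z1|² + |z3 − z1·z2|² and r2² = 1 + |z2|² + |z3|². Then the 3×3 complex matrix û with rows (1/r1, −z̄1/r1, −(z̄3 − z̄1 z̄2)/r1), ((z1(1+|z2|²) − z3 z̄2)/(r1 r2), (1+|z3|² − z1 z2 z̄3)/(r1 r2), −(z̄2 + z1 z̄3)/(r1 r2)), (z3/r2, z2/r2, 1/r2) is unitary, i.e. û·û* = I. -/
open Complex Matrix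

set_option maxHeartbeats 1000000 in
theorem su3_dressing_matrix_unitary (z1 z2 z3 : ℂ)
    (r1 r2 : ℝ)
    (hr1 : r1 = Real.sqrt (1 + normSq z1 + normSq (z3 - z1 * z2)))
    (hr2 : r2 = Real.sqrt (1 + normSq z2 + normSq z3)) :
    let u : Matrix (Fin 3) (Fin 3) ℂ :=
      !![1 / r1, -(starRingEnd ℂ) z1 / r1,
          -((starRingEnd ℂ) z3 - (starRingEnd ℂ) z1 * (starRingEnd ℂ) z2) / r1;
        (z1 * (1 + normSq z2) - z3 * (starRingEnd ℂ) z2) / (r1 * r2),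
          (1 + normSq z3 - z1 * z2 * (starRingEnd ℂ) z3) / (r1 * r2),
          -((starRingEnd ℂ) z2 + z1 * (starRingEnd ℂ) z3) / (r1 * r2);
        z3 / r2, z2 / r2, 1 / r2]
    u * uᴴ = 1 := by
  intro u
  have h1pos : (0:ℝ) < 1 + normSq z1 + normSq (z3 - z1 * z2) := by
    have := normSq_nonneg z1; have := normSq_nonneg (z3 - z1 * z2); linarith
  have h2pos : (0:ℝ) < 1 + normSq z2 + normSq z3 := by
    have := normSq_nonneg z2; have := normSq_nonneg z3; linarith
  have hr1pos : 0 < r1 := hr1 ▸ Real.sqrt_pos.mpr h1pos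
  have hr2pos : 0 < r2 := hr2 ▸ Real.sqrt_pos.mpr h2pos
  have hr1sq' : r1^2 = 1 + normSq z1 + normSq (z3 - z1 * z2) := by
    rw [hr1, Real.sq_sqrt h1pos.le]
  have hr2sq' : r2^2 = 1 + normSq z2 + normSq z3 := by
    rw [hr2, Real.sq_sqrt h2pos.le]
  have hn1 : (normSq z1 : ℂ) = z1 * (starRingEnd ℂ) z1 := (Complex.mul_conj z1).symm
  have hn2 : (normSq z2 : ℂ) = z2 * (starRingEnd ℂ) z2 := (Complex.mul_conj z2).symm
  have hn3 : (normSq z3 : ℂ) = z3 * (starRingEnd ℂ) z3 := (Complex.mul_conj z3).symm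
  have hn4 : (normSq (z3 - z1 * z2) : ℂ)
      = (z3 - z1 * z2) * ((starRingEnd ℂ) z3 - (starRingEnd ℂ) z1 * (starRingEnd ℂ) z2) := by
    rw [← Complex.mul_conj]; simp
  have hr1sq : (r1:ℂ)^2 = 1 + z1 * (starRingEnd ℂ) z1
      + (z3 - z1 * z2) * ((starRingEnd ℂ) z3 - (starRingEnd ℂ) z1 * (starRingEnd ℂ) z2) := by
    rw [← hn1, ← hn4]; exact_mod_cast congrArg (Complex.ofReal) hr1sq'
  have hr2sq : (r2:ℂ)^2 = 1 + z2 * (starRingEnd ℂ) z2 + z3 * (starRingEnd ℂ) z3 := by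
    rw [← hn2, ← hn3]; exact_mod_cast congrArg (Complex.ofReal) hr2sq'
  have hc1 : ((r1:ℂ)) ≠ 0 := by exact_mod_cast hr1pos.ne'
  have hc2 : ((r2:ℂ)) ≠ 0 := by exact_mod_cast hr2pos.ne'
  have hu : uᴴ = !![1 / (r1:ℂ), ((starRingEnd ℂ) z1 * (1 + normSq z2) - (starRingEnd ℂ) z3 * z2) / (r1 * r2), (starRingEnd ℂ) z3 / r2;
      -z1 / r1, (1 + normSq z3 - (starRingEnd ℂ) z1 * (starRingEnd ℂ) z2 * z3) / (r1 * r2), (starRingEnd ℂ) z2 / r2;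
      -(z3 - z1 * z2) / r1, -(z2 + (starRingEnd ℂ) z1 * z3) / (r1 * r2), 1 / (r2:ℂ)] := by
    rw [eta_fin_three uᴴ]
    simp [u, conjTranspose_apply, Matrix.cons_val_two, Matrix.tail_cons, Complex.star_def,
      map_div₀, Complex.conj_ofReal]
  rw [hu]
  show (!![1 / r1, -(starRingEnd ℂ) z1 / r1,
          -((starRingEnd ℂ) z3 - (starRingEnd ℂ) z1 * (starRingEnd ℂ) z2) / r1;
        (z1 * (1 + normSq z2) - z3 * (starRingEnd ℂ) z2) / (r1 * r2),
          (1 + normSq z3 - z1 * z2 * (starRingEnd ℂ) z3) / (r1 * r2),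
          -((starRingEnd ℂ) z2 + z1 * (starRingEnd ℂ) z3) / (r1 * r2);
        z3 / r2, z2 / r2, 1 / r2] : Matrix (Fin 3) (Fin 3) ℂ) * _ = 1
  rw [mul_fin_three, one_fin_three]
  simp only [hn1, hn2, hn3]
  have key : ∀ a c b : ℂ, b ≠ 0 → a = c * b → a / b = c := by
    intro a c b hb h
    rw [h, mul_div_assoc, div_self hb, mul_one]
  have hfin2 : ∀ (h : 2 < 3), (⟨2, h⟩ : Fin 3) = 2 := fun _ => rfl
  ext i j
  fin_cases i <;> fin_cases j <;>
    simp only [hfin2, Matrix.cons_val', Matrix.cons_val_zero, Matrix.cons_val_one,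
      Matrix.head_cons, Matrix.empty_val', Matrix.cons_val_fin_one, Matrix.head_fin_const,
      Matrix.of_apply, Matrix.cons_val_two, Matrix.tail_cons, Fin.mk_zero, Fin.mk_one] <;>
    rw [div_mul_div_comm, div_mul_div_comm, div_mul_div_comm, ← add_div,
      ← add_div] <;>
    refine key _ _ _ (by simp [hc1, hc2]) ?_ <;>
    first
    | ring1
    | linear_combination hr1sq
    | linear_combination hr2sq
    | linear_combination -hr1sq
    | linear_combination -hr2sq
    | linear_combination (r2:ℂ)^2 * hr1sq
        + (1 + z1 * (starRingEnd ℂ) z1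
            + (z3 - z1 * z2) * ((starRingEnd ℂ) z3 - (starRingEnd ℂ) z1 * (starRingEnd ℂ) z2))
          * hr2sq
    | linear_combination (r1:ℂ)^2 * hr2sq
        + (1 + z2 * (starRingEnd ℂ) z2 + z3 * (starRingEnd ℂ) z3) * hr1sq
    | linear_combination -((r2:ℂ)^2 * hr1sq)
        - (1 + z1 * (starRingEnd ℂ) z1
            + (z3 - z1 * z2) * ((starRingEnd ℂ) z3 - (starRingEnd ℂ) z1 * (starRingEnd ℂ) z2))
          * hr2sq
    | linear_combination -((r1:ℂ)^2 * hr2sq)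
        - (1 + z2 * (starRingEnd ℂ) z2 + z3 * (starRingEnd ℂ) z3) * hr1sq
end

section
/- Let z1, z2, z3 ∈ ℂ, and set r1² = 1 + |z1|² + |z3 − z1 z2|², r2² = 1 + |z2|² + |z3|², n1 = (z̄1(1+|z2|²) − z2 z̄3)/r1², n2 = (z̄2 + z1 z̄3)/r2², n3 = z̄3/r2². Let ẑ be the lower unitriangular matrix with subdiagonal entries z1, z2 and corner entry z3, let n̂ be the upper unitriangular matrix with entries n1, n3, n2, and let â = diag(1/r1, r1/r2, r2). Then ẑ·ẑ* = n̂·â²·n̂*. -/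
open Complex Matrix

lemma su3_iwasawa_helper (z1 z2 z3 w1 w2 w3 A B : ℂ)
    (hA : A = 1 + z1 * w1 + (z3 - z1 * z2) * (w3 - w1 * w2))
    (hB : B = 1 + z2 * w2 + z3 * w3)
    (hA0 : A ≠ 0) (hB0 : B ≠ 0) :
    !![(1:ℂ), 0, 0; z1, 1, 0; z3, z2, 1] * !![(1:ℂ), w1, w3; 0, 1, w2; 0, 0, 1]
      = !![(1:ℂ), (w1 * (1 + z2 * w2) - z2 * w3) / A, w3 / B; 0, 1, (w2 + z1 * w3) / B; 0, 0, 1]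
        * !![1 / A, 0, 0; 0, A / B, 0; 0, 0, B]
        * !![(1:ℂ), 0, 0; (z1 * (1 + w2 * z2) - w2 * z3) / A, 1, 0;
             z3 / B, (z2 + w1 * z3) / B, 1] := by
  ext i j
  fin_cases i <;> fin_cases j
  all_goals simp [Matrix.mul_apply, Fin.sum_univ_succ]
  all_goals try field_simp
  all_goals try simp only [hA, hB]
  all_goals ring

theorem su3_iwasawa_key_identity (z1 z2 z3 : ℂ)
    (r1 r2 : ℝ)
    (hr1 : r1 = Real.sqrt (1 + normSq z1 + normSq (z3 - z1 * z2)))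
    (hr2 : r2 = Real.sqrt (1 + normSq z2 + normSq z3))
    (n1 n2 n3 : ℂ)
    (hn1 : n1 = ((starRingEnd ℂ) z1 * (1 + normSq z2) - z2 * (starRingEnd ℂ) z3) / r1 ^ 2)
    (hn2 : n2 = ((starRingEnd ℂ) z2 + z1 * (starRingEnd ℂ) z3) / r2 ^ 2)
    (hn3 : n3 = (starRingEnd ℂ) z3 / r2 ^ 2) :
    let zhat : Matrix (Fin 3) (Fin 3) ℂ := !![1, 0, 0; z1, 1, 0; z3, z2, 1]
    let nhat : Matrix (Fin 3) (Fin 3) ℂ := !![1, n1, n3; 0, 1, n2; 0, 0, 1]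
    let ahat : Matrix (Fin 3) (Fin 3) ℂ :=
      Matrix.diagonal ![(1 / r1 : ℂ), (r1 / r2 : ℂ), (r2 : ℂ)]
    zhat * zhatᴴ = nhat * (ahat * ahat) * nhatᴴ := by
  intro zhat nhat ahat
  have h1pos : (0:ℝ) < 1 + normSq z1 + normSq (z3 - z1 * z2) := by
    have := normSq_nonneg z1; have := normSq_nonneg (z3 - z1 * z2); linarith
  have h2pos : (0:ℝ) < 1 + normSq z2 + normSq z3 := by
    have := normSq_nonneg z2; have := normSq_nonneg z3; linarith
  have hr1pos : 0 < r1 := hr1 ▸ Real.sqrt_pos.mpr h1pos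
  have hr2pos : 0 < r2 := hr2 ▸ Real.sqrt_pos.mpr h2pos
  have hr1c : ((r1:ℂ)) ≠ 0 := by exact_mod_cast hr1pos.ne'
  have hr2c : ((r2:ℂ)) ≠ 0 := by exact_mod_cast hr2pos.ne'
  set w1 := (starRingEnd ℂ) z1 with hw1
  set w2 := (starRingEnd ℂ) z2 with hw2
  set w3 := (starRingEnd ℂ) z3 with hw3
  have hA : ((r1:ℂ))^2 = 1 + z1 * w1 + (z3 - z1 * z2) * (w3 - w1 * w2) := by
    have h : ((r1:ℝ)^2 : ℝ) = 1 + normSq z1 + normSq (z3 - z1 * z2) := by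
      rw [hr1, Real.sq_sqrt h1pos.le]
    have h2 := congrArg (Complex.ofReal) h
    push_cast at h2
    rw [h2, ← Complex.mul_conj z1, ← Complex.mul_conj (z3 - z1 * z2)]
    simp only [map_sub, RingHom.map_mul, ← hw1, ← hw2, ← hw3]
  have hB : ((r2:ℂ))^2 = 1 + z2 * w2 + z3 * w3 := by
    have h : ((r2:ℝ)^2 : ℝ) = 1 + normSq z2 + normSq z3 := by
      rw [hr2, Real.sq_sqrt h2pos.le]
    have h2 := congrArg (Complex.ofReal) h
    push_cast at h2
    rw [h2, ← Complex.mul_conj z2, ← Complex.mul_conj z3]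
  have hzc : zhatᴴ = !![(1:ℂ), w1, w3; 0, 1, w2; 0, 0, 1] := by
    ext i j
    fin_cases i <;> fin_cases j <;> simp [zhat, conjTranspose_apply, Matrix.vecHead, Matrix.vecTail] <;> rfl
  have hn1' : n1 = (w1 * (1 + z2 * w2) - z2 * w3) / (r1:ℂ)^2 := by
    rw [hn1, ← Complex.mul_conj z2, ← hw2]
  have hn2' : n2 = (w2 + z1 * w3) / (r2:ℂ)^2 := hn2
  have hn3' : n3 = w3 / (r2:ℂ)^2 := hn3
  have hnc : nhatᴴ = !![(1:ℂ), 0, 0; (z1 * (1 + w2 * z2) - w2 * z3) / (r1:ℂ)^2, 1, 0;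
      z3 / (r2:ℂ)^2, (z2 + w1 * z3) / (r2:ℂ)^2, 1] := by
    ext i j
    fin_cases i <;> fin_cases j <;>
      simp [nhat, conjTranspose_apply, hn1', hn2', hn3', map_div₀, hw1, hw2, hw3,
        ← Complex.ofReal_pow, Complex.conj_ofReal, mul_comm, Matrix.vecHead, Matrix.vecTail]
  have haa : ahat * ahat = !![1 / (r1:ℂ)^2, 0, 0; 0, (r1:ℂ)^2 / (r2:ℂ)^2, 0; 0, 0, (r2:ℂ)^2] := by
    rw [show ahat = Matrix.diagonal ![(1 / r1 : ℂ), (r1 / r2 : ℂ), (r2 : ℂ)] from rfl,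
      Matrix.diagonal_mul_diagonal]
    ext i j
    fin_cases i <;> fin_cases j <;>
      · simp [Matrix.diagonal, Matrix.vecHead, Matrix.vecTail]
        try ring
  have hnn : nhat = !![(1:ℂ), (w1 * (1 + z2 * w2) - z2 * w3) / (r1:ℂ)^2, w3 / (r2:ℂ)^2;
      0, 1, (w2 + z1 * w3) / (r2:ℂ)^2; 0, 0, 1] := by
    rw [show nhat = !![1, n1, n3; 0, 1, n2; 0, 0, 1] from rfl, hn1', hn2', hn3']
  rw [hzc, hnc, haa, hnn]
  exact su3_iwasawa_helper z1 z2 z3 w1 w2 w3 _ _ hA hB (pow_ne_zero 2 hr1c) (pow_ne_zero 2 hr2c)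
end

section
/- Fix real ξ, η and complex z1, z2, z3, and define μ1,…,μ8 by the generalized stereographic projection formulas: with r1² = 1+|z1|²+|z3−z1z2|², r2² = 1+|z2|²+|z3|², μ1 = −(η/r2²)(z̄2 z3 + z2 z̄3) − (ξ/r1²)(z1 + z̄1), μ2 = i(η/r2²)(z̄2 z3 − z2 z̄3) + i(ξ/r1²)(z1 − z̄1), μ3 = (η/r2²)(|z2|²−|z3|²) + (ξ/r1²)(1−|z1|²), μ4 = −(η/r2²)(z3+z̄3) − (ξ/r1²)(z3−z1z2 + z̄3−z̄1z̄2), μ5 = i(η/r2²)(z3−z̄3) + i(ξ/r1²)((z3−z1z2) − (z̄3−z̄1z̄2)), μ6 = −(η/r2²)(z2+z̄2) + (ξ/r1²)(z̄1(z3−z1z2) + z1(z̄3−z̄1z̄2)), μ7 = i(η/r2²)(z2−z̄2) − i(ξ/r1²)(z̄1(z3−z1z2) − z1(z̄3−z̄1z̄2)), √3·μ8 = (η/r2²)(2−|z2|²−|z3|²) + (ξ/r1²)(1+|z1|²−2|z3−z1z2|²). Then Σ_{a=1}^{8} μ_a² = (4/3)(ξ² + ξη + η²), independently of z1, z2, z3.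 -/
open Complex

noncomputable section

def R1sq (z1 z2 z3 : ℂ) : ℝ := 1 + normSq z1 + normSq (z3 - z1 * z2)
def R2sq (z2 z3 : ℂ) : ℝ := 1 + normSq z2 + normSq z3

def mu1 (ξ η : ℝ) (z1 z2 z3 : ℂ) : ℂ :=
  -(η / R2sq z2 z3) * ((starRingEnd ℂ) z2 * z3 + z2 * (starRingEnd ℂ) z3)
    - (ξ / R1sq z1 z2 z3) * (z1 + (starRingEnd ℂ) z1)

def mu2 (ξ η : ℝ) (z1 z2 z3 : ℂ) : ℂ :=
  Complex.I * (η / R2sq z2 z3) * ((starRingEnd ℂ) z2 * z3 - z2 * (starRingEnd ℂ) z3)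
    + Complex.I * (ξ / R1sq z1 z2 z3) * (z1 - (starRingEnd ℂ) z1)

def mu3 (ξ η : ℝ) (z1 z2 z3 : ℂ) : ℂ :=
  (η / R2sq z2 z3) * (normSq z2 - normSq z3)
    + (ξ / R1sq z1 z2 z3) * (1 - normSq z1)

def mu4 (ξ η : ℝ) (z1 z2 z3 : ℂ) : ℂ :=
  -(η / R2sq z2 z3) * (z3 + (starRingEnd ℂ) z3)
    - (ξ / R1sq z1 z2 z3) *
      (z3 - z1 * z2 + (starRingEnd ℂ) z3 - (starRingEnd ℂ) z1 * (starRingEnd ℂ) z2)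

def mu5 (ξ η : ℝ) (z1 z2 z3 : ℂ) : ℂ :=
  Complex.I * (η / R2sq z2 z3) * (z3 - (starRingEnd ℂ) z3)
    + Complex.I * (ξ / R1sq z1 z2 z3) *
      ((z3 - z1 * z2) - ((starRingEnd ℂ) z3 - (starRingEnd ℂ) z1 * (starRingEnd ℂ) z2))

def mu6 (ξ η : ℝ) (z1 z2 z3 : ℂ) : ℂ :=
  -(η / R2sq z2 z3) * (z2 + (starRingEnd ℂ) z2)
    + (ξ / R1sq z1 z2 z3) *
      ((starRingEnd ℂ) z1 * (z3 - z1 * z2)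
        + z1 * ((starRingEnd ℂ) z3 - (starRingEnd ℂ) z1 * (starRingEnd ℂ) z2))

def mu7 (ξ η : ℝ) (z1 z2 z3 : ℂ) : ℂ :=
  Complex.I * (η / R2sq z2 z3) * (z2 - (starRingEnd ℂ) z2)
    - Complex.I * (ξ / R1sq z1 z2 z3) *
      ((starRingEnd ℂ) z1 * (z3 - z1 * z2)
        - z1 * ((starRingEnd ℂ) z3 - (starRingEnd ℂ) z1 * (starRingEnd ℂ) z2))

def mu8 (ξ η : ℝ) (z1 z2 z3 : ℂ) : ℂ :=
  ((η / R2sq z2 z3) * (2 - normSq z2 - normSq z3)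
    + (ξ / R1sq z1 z2 z3) * (1 + normSq z1 - 2 * normSq (z3 - z1 * z2)))
    / (Real.sqrt 3 : ℂ)

end

private theorem key_poly (A B z1 z2 z3 c1 c2 c3 : ℂ) :
    (-B * (c2 * z3 + z2 * c3) - A * (z1 + c1)) ^ 2
  + (-((B * (c2 * z3 - z2 * c3) + A * (z1 - c1)) ^ 2))
  + (B * (z2 * c2 - z3 * c3) + A * (1 - z1 * c1)) ^ 2
  + (-B * (z3 + c3) - A * (z3 - z1 * z2 + c3 - c1 * c2)) ^ 2
  + (-((B * (z3 - c3) + A * ((z3 - z1 * z2) - (c3 - c1 * c2))) ^ 2))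
  + (-B * (z2 + c2) + A * (c1 * (z3 - z1 * z2) + z1 * (c3 - c1 * c2))) ^ 2
  + (-((B * (z2 - c2) - A * (c1 * (z3 - z1 * z2) - z1 * (c3 - c1 * c2))) ^ 2))
  + ((B * (2 - z2 * c2 - z3 * c3)
      + A * (1 + z1 * c1 - 2 * ((z3 - z1 * z2) * (c3 - c1 * c2)))) ^ 2) / 3
  = (4/3) * ((A * (1 + z1 * c1 + (z3 - z1 * z2) * (c3 - c1 * c2))) ^ 2
      + (A * (1 + z1 * c1 + (z3 - z1 * z2) * (c3 - c1 * c2)))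
        * (B * (1 + z2 * c2 + z3 * c3))
      + (B * (1 + z2 * c2 + z3 * c3)) ^ 2) := by
  ring

set_option maxHeartbeats 1000000 in
theorem su3_casimir_invariant (ξ η : ℝ) (z1 z2 z3 : ℂ) :
    mu1 ξ η z1 z2 z3 ^ 2 + mu2 ξ η z1 z2 z3 ^ 2 + mu3 ξ η z1 z2 z3 ^ 2 +
    mu4 ξ η z1 z2 z3 ^ 2 + mu5 ξ η z1 z2 z3 ^ 2 + mu6 ξ η z1 z2 z3 ^ 2 +
    mu7 ξ η z1 z2 z3 ^ 2 + mu8 ξ η z1 z2 z3 ^ 2 =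
      ((4 / 3 : ℝ) * (ξ ^ 2 + ξ * η + η ^ 2) : ℝ) := by
  have hr1pos : (0:ℝ) < R1sq z1 z2 z3 := by
    unfold R1sq; nlinarith [normSq_nonneg z1, normSq_nonneg (z3 - z1*z2)]
  have hr2pos : (0:ℝ) < R2sq z2 z3 := by
    unfold R2sq; nlinarith [normSq_nonneg z2, normSq_nonneg z3]
  have hr1ne : ((R1sq z1 z2 z3 : ℝ) : ℂ) ≠ 0 := by
    exact_mod_cast ne_of_gt hr1pos
  have hr2ne : ((R2sq z2 z3 : ℝ) : ℂ) ≠ 0 := by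
    exact_mod_cast ne_of_gt hr2pos
  have n1 : ((normSq z1 : ℝ) : ℂ) = z1 * (starRingEnd ℂ) z1 := (Complex.mul_conj z1).symm
  have n2 : ((normSq z2 : ℝ) : ℂ) = z2 * (starRingEnd ℂ) z2 := (Complex.mul_conj z2).symm
  have n3 : ((normSq z3 : ℝ) : ℂ) = z3 * (starRingEnd ℂ) z3 := (Complex.mul_conj z3).symm
  have nw : ((normSq (z3 - z1 * z2) : ℝ) : ℂ)
      = (z3 - z1 * z2) * ((starRingEnd ℂ) z3 - (starRingEnd ℂ) z1 * (starRingEnd ℂ) z2) := by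
    rw [← Complex.mul_conj (z3 - z1 * z2), map_sub, map_mul]
  have sqrt3 : ((Real.sqrt 3 : ℝ) : ℂ) ^ 2 = 3 := by
    rw [← Complex.ofReal_pow, Real.sq_sqrt (by norm_num : (3:ℝ) ≥ 0)]; norm_num
  have h2 : mu2 ξ η z1 z2 z3 ^ 2 =
      -((((η : ℂ) / (R2sq z2 z3 : ℝ)) * ((starRingEnd ℂ) z2 * z3 - z2 * (starRingEnd ℂ) z3)
        + ((ξ : ℂ) / (R1sq z1 z2 z3 : ℝ)) * (z1 - (starRingEnd ℂ) z1)) ^ 2) := by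
    unfold mu2; push_cast
    linear_combination ((((η : ℂ) / (R2sq z2 z3 : ℝ)) * ((starRingEnd ℂ) z2 * z3 - z2 * (starRingEnd ℂ) z3)
        + ((ξ : ℂ) / (R1sq z1 z2 z3 : ℝ)) * (z1 - (starRingEnd ℂ) z1)) ^ 2) * Complex.I_sq
  have h5 : mu5 ξ η z1 z2 z3 ^ 2 =
      -((((η : ℂ) / (R2sq z2 z3 : ℝ)) * (z3 - (starRingEnd ℂ) z3)
        + ((ξ : ℂ) / (R1sq z1 z2 z3 : ℝ)) *
          ((z3 - z1 * z2) - ((starRingEnd ℂ) z3 - (starRingEnd ℂ) z1 * (starRingEnd ℂ) z2))) ^ 2) := by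
    unfold mu5; push_cast
    linear_combination ((((η : ℂ) / (R2sq z2 z3 : ℝ)) * (z3 - (starRingEnd ℂ) z3)
        + ((ξ : ℂ) / (R1sq z1 z2 z3 : ℝ)) *
          ((z3 - z1 * z2) - ((starRingEnd ℂ) z3 - (starRingEnd ℂ) z1 * (starRingEnd ℂ) z2))) ^ 2) * Complex.I_sq
  have h7 : mu7 ξ η z1 z2 z3 ^ 2 =
      -((((η : ℂ) / (R2sq z2 z3 : ℝ)) * (z2 - (starRingEnd ℂ) z2)
        - ((ξ : ℂ) / (R1sq z1 z2 z3 : ℝ)) *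
          ((starRingEnd ℂ) z1 * (z3 - z1 * z2)
            - z1 * ((starRingEnd ℂ) z3 - (starRingEnd ℂ) z1 * (starRingEnd ℂ) z2))) ^ 2) := by
    unfold mu7; push_cast
    linear_combination ((((η : ℂ) / (R2sq z2 z3 : ℝ)) * (z2 - (starRingEnd ℂ) z2)
        - ((ξ : ℂ) / (R1sq z1 z2 z3 : ℝ)) *
          ((starRingEnd ℂ) z1 * (z3 - z1 * z2)
            - z1 * ((starRingEnd ℂ) z3 - (starRingEnd ℂ) z1 * (starRingEnd ℂ) z2))) ^ 2) * Complex.I_sq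
  have h8 : mu8 ξ η z1 z2 z3 ^ 2 =
      ((((η : ℂ) / (R2sq z2 z3 : ℝ)) * (2 - (normSq z2 : ℝ) - (normSq z3 : ℝ))
        + ((ξ : ℂ) / (R1sq z1 z2 z3 : ℝ)) *
          (1 + (normSq z1 : ℝ) - 2 * (normSq (z3 - z1 * z2) : ℝ))) ^ 2) / 3 := by
    unfold mu8; rw [div_pow, sqrt3]
  have hr1 : ((R1sq z1 z2 z3 : ℝ) : ℂ)
      = 1 + z1 * (starRingEnd ℂ) z1
        + (z3 - z1 * z2) * ((starRingEnd ℂ) z3 - (starRingEnd ℂ) z1 * (starRingEnd ℂ) z2) := by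
    unfold R1sq; push_cast; rw [n1, nw]
  have hr2 : ((R2sq z2 z3 : ℝ) : ℂ)
      = 1 + z2 * (starRingEnd ℂ) z2 + z3 * (starRingEnd ℂ) z3 := by
    unfold R2sq; push_cast; rw [n2, n3]
  set c1 := (starRingEnd ℂ) z1
  set c2 := (starRingEnd ℂ) z2
  set c3 := (starRingEnd ℂ) z3
  set A := (ξ : ℂ) / ((R1sq z1 z2 z3 : ℝ) : ℂ) with hAdef
  set B := (η : ℂ) / ((R2sq z2 z3 : ℝ) : ℂ) with hBdef
  have hA : A * (1 + z1 * c1 + (z3 - z1 * z2) * (c3 - c1 * c2)) = (ξ : ℂ) := by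
    rw [hAdef, ← hr1, div_mul_cancel₀ _ hr1ne]
  have hB : B * (1 + z2 * c2 + z3 * c3) = (η : ℂ) := by
    rw [hBdef, ← hr2, div_mul_cancel₀ _ hr2ne]
  rw [h2, h5, h7, h8]
  simp only [mu1, mu3, mu4, mu6]
  push_cast
  rw [n1, n2, n3, nw]
  linear_combination key_poly A B z1 z2 z3 c1 c2 c3
    + (4/3) * (A * (1 + z1 * c1 + (z3 - z1 * z2) * (c3 - c1 * c2)) + (ξ : ℂ)
        + B * (1 + z2 * c2 + z3 * c3)) * hA
    + (4/3) * (B * (1 + z2 * c2 + z3 * c3) + (η : ℂ) + (ξ : ℂ)) * hB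
end
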